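/- For every positive integer ℓ and every s₀ ≥ 0, φ(ℓ, s₀, t) converges to s̄_ℓ as t → ∞. -/

import Mathlib

open Set Filter Topology

private lemma mul_aux_pos (a x : ℝ) (ha : a ≠ 0) : a * (x / a + 1) = x + a := by
  rw [mul_add, mul_one, mul_div_cancel₀ x ha]

private lemma mul_aux_neg (a x : ℝ) (ha : a ≠ 0) : a * (x / (-a) + 1) = -x + a := by
  rw [mul_add, mul_one, div_neg, mul_neg, mul_div_cancel₀ x ha]

/-- Barrier lemma: if the vector field is strictly positive at level `v` and the solution
starts (at time `T ≥ 0`) at or above `v`, it stays at or above `v` forever. -/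
lemma stayAbove (F s : ℝ → ℝ)
    (hcont : ContinuousOn s (Set.Ici 0))
    (hderiv : ∀ t, 0 ≤ t → HasDerivWithinAt s (F (s t)) (Set.Ici 0) t)
    (v : ℝ) (hFv : 0 < F v) (T : ℝ) (hT : 0 ≤ T) (hsT : v ≤ s T) :
    ∀ t, T ≤ t → v ≤ s t := by
  intro t ht
  by_contra hlt
  push_neg at hlt
  have htT : T < t := by
    rcases eq_or_lt_of_le ht with rfl | h
    · exact absurd hsT (not_le.2 hlt)
    · exact h
  set A : Set ℝ := {τ | τ ∈ Set.Icc T t ∧ v ≤ s τ} with hA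
  have hAne : A.Nonempty := ⟨T, ⟨le_rfl, ht⟩, hsT⟩
  have hAclosed : IsClosed A := by
    have : A = Set.Icc T t ∩ s ⁻¹' Set.Ici v := by
      ext τ; simp [hA, Set.mem_Icc, and_assoc]
    rw [this]
    exact (hcont.mono (fun x hx => le_trans hT hx.1)).preimage_isClosed_of_isClosed
      isClosed_Icc isClosed_Ici
  have hAbdd : BddAbove A := ⟨t, fun τ hτ => hτ.1.2⟩
  set t1 := sSup A with ht1
  have ht1A : t1 ∈ A := hAclosed.csSup_mem hAne hAbdd
  have ht1t : t1 < t :=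
    lt_of_le_of_ne ht1A.1.2 (fun heq => absurd (heq ▸ ht1A.2) (not_le.2 hlt))
  have ht10 : 0 ≤ t1 := hT.trans ht1A.1.1
  have hmem : ∀ τ, τ ∈ Set.Ioc t1 t → s τ < v := by
    intro τ hτ
    by_contra hge; push_neg at hge
    have : τ ∈ A := ⟨⟨ht1A.1.1.trans hτ.1.le, hτ.2⟩, hge⟩
    exact absurd (le_csSup hAbdd this) (not_le.2 hτ.1)
  have hIoc : Set.Ioc t1 t ∈ 𝓝[>] t1 := Ioc_mem_nhdsGT_of_mem ⟨le_rfl, ht1t⟩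
  have hmono : 𝓝[>] t1 ≤ 𝓝[Set.Ici 0] t1 :=
    nhdsWithin_mono _ (fun x hx => le_trans ht10 (le_of_lt hx))
  have hs1le : s t1 ≤ v := by
    have hten : Filter.Tendsto s (𝓝[>] t1) (𝓝 (s t1)) := (hcont t1 ht10).mono_left hmono
    exact le_of_tendsto hten (by
      filter_upwards [hIoc] with τ hτ using (hmem τ hτ).le)
  have hst1 : s t1 = v := le_antisymm hs1le ht1A.2
  have hd := hderiv t1 ht10
  rw [hasDerivWithinAt_iff_tendsto_slope] at hd
  have hmono2 : 𝓝[>] t1 ≤ 𝓝[Set.Ici 0 \ {t1}] t1 := by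
    apply nhdsWithin_mono
    intro x hx
    exact ⟨le_trans ht10 (le_of_lt hx), by simp [(Set.mem_Ioi.mp hx).ne']⟩
  have hd' : Filter.Tendsto (slope s t1) (𝓝[>] t1) (𝓝 (F (s t1))) := hd.mono_left hmono2
  have hpos : ∀ᶠ τ in 𝓝[>] t1, 0 < slope s t1 τ := by
    apply hd'.eventually
    rw [hst1]
    exact eventually_gt_nhds hFv
  have hfalse : ∀ᶠ τ in 𝓝[>] t1, False := by
    filter_upwards [hpos, hIoc] with τ h1 h2
    have hslope : slope s t1 τ < 0 := by
      rw [slope_def_field]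
      apply div_neg_of_neg_of_pos
      · rw [hst1]; linarith [hmem τ h2]
      · linarith [h2.1]
    linarith
  obtain ⟨τ, hτ⟩ := hfalse.exists
  exact hτ

/-- For every positive integer ℓ and every s₀ ≥ 0, the flow φ(ℓ, s₀, t) converges to the
equilibrium s̄_ℓ as t → ∞. -/
theorem stmt_7
    (D sIn k : ℝ) (μ : ℝ → ℝ)
    (hD : 0 < D) (hsIn : 0 < sIn) (hk : 0 < k)
    (hμC1 : ContDiffOn ℝ 1 μ (Set.Ici 0))
    (hμmono : StrictMonoOn μ (Set.Ici 0))
    (hμ0 : μ 0 = 0)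
    (hμpos : ∀ s : ℝ, 0 < s → 0 < μ s)
    (sbar : ℕ → ℝ)
    (hsbar_mem : ∀ ℓ : ℕ, 1 ≤ ℓ → sbar ℓ ∈ Set.Ioo 0 sIn)
    (hsbar_eq : ∀ ℓ : ℕ, 1 ≤ ℓ → D * (sIn - sbar ℓ) - k * μ (sbar ℓ) * (ℓ : ℝ) = 0)
    (phi : ℕ → ℝ → ℝ → ℝ)
    (hphi_init : ∀ ℓ : ℕ, 1 ≤ ℓ → ∀ s₀ : ℝ, 0 ≤ s₀ → phi ℓ s₀ 0 = s₀)
    (hphi_deriv : ∀ ℓ : ℕ, 1 ≤ ℓ → ∀ s₀ : ℝ, 0 ≤ s₀ → ∀ t : ℝ, 0 ≤ t →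
      HasDerivWithinAt (phi ℓ s₀)
        (D * (sIn - phi ℓ s₀ t) - k * μ (phi ℓ s₀ t) * (ℓ : ℝ)) (Set.Ici 0) t) :
    ∀ ℓ : ℕ, 1 ≤ ℓ → ∀ s₀ : ℝ, 0 ≤ s₀ →
      Filter.Tendsto (phi ℓ s₀) Filter.atTop (nhds (sbar ℓ)) := by
  intro ℓ hℓ s₀ hs₀
  set s : ℝ → ℝ := phi ℓ s₀ with hsdef
  set F : ℝ → ℝ := fun x => D * (sIn - x) - k * μ x * (ℓ : ℝ) with hFdef
  have hderiv : ∀ t, 0 ≤ t → HasDerivWithinAt s (F (s t)) (Set.Ici 0) t :=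
    fun t ht => hphi_deriv ℓ hℓ s₀ hs₀ t ht
  have hcont : ContinuousOn s (Set.Ici 0) := fun t ht => (hderiv t ht).continuousWithinAt
  have hinit : s 0 = s₀ := hphi_init ℓ hℓ s₀ hs₀
  obtain ⟨he0, heIn⟩ := hsbar_mem ℓ hℓ
  set e := sbar ℓ with hedef
  have hFe : F e = 0 := hsbar_eq ℓ hℓ
  have hℓpos : (0:ℝ) < (ℓ:ℝ) := by exact_mod_cast hℓ
  have hanti : ∀ a b : ℝ, 0 ≤ a → a < b → F b < F a := by
    intro a b ha hab
    have hμab : μ a < μ b :=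
      hμmono (Set.mem_Ici.2 ha) (Set.mem_Ici.2 (ha.trans hab.le)) hab
    simp only [hFdef]
    nlinarith [mul_pos (mul_pos hk (sub_pos.2 hμab)) hℓpos, mul_pos hD (sub_pos.2 hab)]
  -- the "stay below" barrier, obtained from stayAbove by reflection
  have stayBelow : ∀ v : ℝ, F v < 0 → ∀ T, 0 ≤ T → s T ≤ v → ∀ t, T ≤ t → s t ≤ v := by
    intro v hFv T hT hsT t ht
    have := stayAbove (fun x => -F (-x)) (fun τ => -(s τ)) hcont.neg
      (fun τ hτ => by have h := (hderiv τ hτ).neg; simp only [neg_neg]; exact h)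
      (-v) (by simpa using hFv) T hT (by simpa using hsT) t ht
    simpa using this
  rw [Metric.tendsto_atTop]
  intro ε hε
  set ε' := min (ε/2) (e/2) with hε'def
  have hε' : 0 < ε' := lt_min (by linarith) (by linarith)
  have hε'e : ε' ≤ e/2 := min_le_right _ _
  have hε'ε : ε' ≤ ε/2 := min_le_left _ _
  set v₁ := e - ε' with hv₁def
  set v₂ := e + ε' with hv₂def
  have hv₁0 : 0 ≤ v₁ := by simp only [hv₁def]; linarith
  have hv₂0 : 0 ≤ v₂ := by simp only [hv₂def]; linarith
  have hv₁e : v₁ < e := by simp only [hv₁def]; linarith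
  have hev₂ : e < v₂ := by simp only [hv₂def]; linarith
  have hFv₁ : 0 < F v₁ := by have := hanti v₁ e hv₁0 hv₁e; linarith
  have hFv₂ : F v₂ < 0 := by have := hanti e v₂ he0.le hev₂; linarith
  have hF0 : 0 < F 0 := by have := hanti 0 e le_rfl he0; linarith
  have key : ∃ T : ℝ, 0 ≤ T ∧ ∀ t, T ≤ t → v₁ ≤ s t ∧ s t ≤ v₂ := by
    rcases lt_or_ge s₀ v₁ with hc | hc
    · -- starts below the band; it must eventually reach it from below
      have hnn : ∀ t, 0 ≤ t → 0 ≤ s t :=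
        stayAbove F s hcont hderiv 0 hF0 0 le_rfl (by rw [hinit]; exact hs₀)
      have hreach : ∃ T, 0 ≤ T ∧ v₁ ≤ s T := by
        by_contra h; push_neg at h
        set t₁ : ℝ := (v₁ - s₀) / F v₁ + 1 with ht₁def
        have ht₁pos : 0 < t₁ :=
          add_pos (div_pos (by linarith) hFv₁) one_pos
        obtain ⟨c, hcmem, heq⟩ := exists_hasDerivAt_eq_slope s (fun x => F (s x)) ht₁pos
          (hcont.mono (fun x hx => hx.1))
          (fun x hx => (hderiv x hx.1.le).hasDerivAt (Ici_mem_nhds hx.1))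
        rw [hinit] at heq
        have h1 : F v₁ < F (s c) := hanti (s c) v₁ (hnn c hcmem.1.le) (h c hcmem.1.le)
        have hse : s t₁ - s₀ = F (s c) * t₁ := by
          rw [heq, sub_zero]; field_simp
        have hmul : F v₁ * t₁ < F (s c) * t₁ := mul_lt_mul_of_pos_right h1 ht₁pos
        have hFt : F v₁ * t₁ = (v₁ - s₀) + F v₁ := by
          rw [ht₁def]; exact mul_aux_pos _ _ (ne_of_gt hFv₁)
        have : s t₁ < v₁ := h t₁ ht₁pos.le
        linarith
      obtain ⟨T, hT0, hTv⟩ := hreach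
      exact ⟨T, hT0, fun t ht =>
        ⟨stayAbove F s hcont hderiv v₁ hFv₁ T hT0 hTv t ht,
         stayBelow v₂ hFv₂ 0 le_rfl (by rw [hinit]; linarith) t (hT0.trans ht)⟩⟩
    · rcases le_or_gt s₀ v₂ with hc2 | hc2
      · -- starts inside the band
        exact ⟨0, le_rfl, fun t ht =>
          ⟨stayAbove F s hcont hderiv v₁ hFv₁ 0 le_rfl (by rw [hinit]; exact hc) t ht,
           stayBelow v₂ hFv₂ 0 le_rfl (by rw [hinit]; exact hc2) t ht⟩⟩
      · -- starts above the band; it must eventually reach it from above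
        have hreach : ∃ T, 0 ≤ T ∧ s T ≤ v₂ := by
          by_contra h; push_neg at h
          set t₁ : ℝ := (s₀ - v₂) / (-F v₂) + 1 with ht₁def
          have ht₁pos : 0 < t₁ :=
            add_pos (div_pos (by linarith) (by linarith)) one_pos
          obtain ⟨c, hcmem, heq⟩ := exists_hasDerivAt_eq_slope s (fun x => F (s x)) ht₁pos
            (hcont.mono (fun x hx => hx.1))
            (fun x hx => (hderiv x hx.1.le).hasDerivAt (Ici_mem_nhds hx.1))
          rw [hinit] at heq
          have h1 : F (s c) < F v₂ := hanti v₂ (s c) hv₂0 (h c hcmem.1.le)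
          have hse : s t₁ - s₀ = F (s c) * t₁ := by
            rw [heq, sub_zero]; field_simp
          have hmul : F (s c) * t₁ < F v₂ * t₁ := mul_lt_mul_of_pos_right h1 ht₁pos
          have hFt : F v₂ * t₁ = -(s₀ - v₂) + F v₂ := by
            rw [ht₁def]; exact mul_aux_neg _ _ (ne_of_lt hFv₂)
          have : v₂ < s t₁ := h t₁ ht₁pos.le
          linarith
        obtain ⟨T, hT0, hTv⟩ := hreach
        exact ⟨T, hT0, fun t ht =>
          ⟨stayAbove F s hcont hderiv v₁ hFv₁ 0 le_rfl (by rw [hinit]; linarith) t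
            (hT0.trans ht),
           stayBelow v₂ hFv₂ T hT0 hTv t ht⟩⟩
  obtain ⟨T, hT0, hband⟩ := key
  refine ⟨T, fun t ht => ?_⟩
  obtain ⟨h1, h2⟩ := hband t ht
  rw [Real.dist_eq, abs_lt]
  constructor
  · simp only [hv₁def] at h1; linarith
  · simp only [hv₂def] at h2; linarith
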